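/- Let C(p,q) = (1/2)log(1 + cp/(1+aq)) + (1/2)log(1 + dq/(1+bp)) with 0 < a < d, 0 < b < c and √(ac) + √(bd) ≤ √(cd). Then at any point (p,q) on the boundary line √(ac)(1+bp) + √(bd)(1+aq) = √(cd) with p,q > 0, the partial derivative ∂C/∂p is positive. -/

import Mathlib

/-- The treating-interference-as-noise sum rate of a two-user GIC. -/
noncomputable def Csum (a b c d p q : ℝ) : ℝ :=
  (1 / 2) * Real.log (1 + c * p / (1 + a * q))
    + (1 / 2) * Real.log (1 + d * q / (1 + b * p))

/-- on the boundary line of the noisy-interference region with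
p,q > 0, the partial derivative ∂C/∂p is positive. -/
theorem Csum_partial_deriv_pos_on_boundary (a b c d p q : ℝ)
    (ha : 0 < a) (had : a < d) (hb : 0 < b) (hbc : b < c)
    (hNI : Real.sqrt (a * c) + Real.sqrt (b * d) ≤ Real.sqrt (c * d))
    (hp : 0 < p) (hq : 0 < q)
    (hline : Real.sqrt (a * c) * (1 + b * p) + Real.sqrt (b * d) * (1 + a * q)
      = Real.sqrt (c * d)) :
    HasDerivAt (fun p' => Csum a b c d p' q)
      ((1 / 2) * (c / (1 + c * p + a * q) + b / (1 + b * p + d * q)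
        - b / (1 + b * p))) p ∧
    0 < (1 / 2) * (c / (1 + c * p + a * q) + b / (1 + b * p + d * q)
      - b / (1 + b * p)) := by
  have hc : (0:ℝ) < c := hb.trans hbc
  have hd : (0:ℝ) < d := ha.trans had
  have h3 : (0:ℝ) < 1 + b * p := by nlinarith [mul_pos hb hp]
  have hIq : (0:ℝ) < 1 + a * q := by nlinarith [mul_pos ha hq]
  have h1 : (0:ℝ) < 1 + c * p + a * q := by nlinarith [mul_pos hc hp, mul_pos ha hq]
  have h2 : (0:ℝ) < 1 + b * p + d * q := by nlinarith [mul_pos hb hp, mul_pos hd hq]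
  have hg1pos : (0:ℝ) < 1 + c * p / (1 + a * q) := by positivity
  have hg2pos : (0:ℝ) < 1 + d * q / (1 + b * p) := by positivity
  constructor
  · have hg1 : HasDerivAt (fun p' : ℝ => 1 + c * p' / (1 + a * q)) (c / (1 + a * q)) p := by
      simpa using (((hasDerivAt_id p).const_mul c).div_const (1 + a * q)).const_add 1
    have hlog1 := hg1.log (ne_of_gt hg1pos)
    have hinner : HasDerivAt (fun p' : ℝ => 1 + b * p') b p := by
      simpa using ((hasDerivAt_id p).const_mul b).const_add 1
    have hg2 : HasDerivAt (fun p' : ℝ => 1 + d * q / (1 + b * p'))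
        ((0 * (1 + b * p) - d * q * b) / (1 + b * p) ^ 2) p := by
      simpa using ((hasDerivAt_const p (d * q)).div hinner (ne_of_gt h3)).const_add 1
    have hlog2 := hg2.log (ne_of_gt hg2pos)
    have h := (hlog1.const_mul (1/2 : ℝ)).add (hlog2.const_mul (1/2 : ℝ))
    have heq : (fun p' : ℝ => Csum a b c d p' q)
        = fun p' : ℝ => (1/2 : ℝ) * Real.log (1 + c * p' / (1 + a * q))
            + (1/2 : ℝ) * Real.log (1 + d * q / (1 + b * p')) := by
      funext p'; simp [Csum]
    rw [heq]
    refine h.congr_deriv ?_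
    field_simp
    ring
  · have hsac : 0 < Real.sqrt (a * c) := Real.sqrt_pos.mpr (by positivity)
    have hsbd : 0 < Real.sqrt (b * d) := Real.sqrt_pos.mpr (by positivity)
    have hbd2 : Real.sqrt (b * d) ^ 2 = b * d := Real.sq_sqrt (by positivity)
    have hcd2 : Real.sqrt (c * d) ^ 2 = c * d := Real.sq_sqrt (by positivity)
    have h4 : Real.sqrt (b * d) * (1 + a * q) < Real.sqrt (c * d) := by
      nlinarith [mul_pos hsac h3]
    have h5 : Real.sqrt (b * d) ≤ Real.sqrt (c * d) :=
      Real.sqrt_le_sqrt (by nlinarith)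
    have hkey : b * d * (1 + a * q) < c * d := by
      nlinarith [mul_lt_mul_of_pos_left h4 hsbd,
        mul_le_mul_of_nonneg_right h5 (le_of_lt (Real.sqrt_pos.mpr (show (0:ℝ) < c*d by positivity)))]
    have hP : 0 < c * (1 + b * p) * (1 + b * p + d * q) - b * d * q * (1 + c * p + a * q) := by
      have h6 : 0 < q * (c * d - b * d * (1 + a * q)) := mul_pos hq (by linarith)
      nlinarith [mul_pos (mul_pos ha hc) (pow_pos h3 2), mul_pos ha h6]
    have key : b / (1 + b * p) - b / (1 + b * p + d * q) < c / (1 + c * p + a * q) := by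
      rw [div_sub_div _ _ (ne_of_gt h3) (ne_of_gt h2), div_lt_div_iff₀ (by positivity) h1]
      ring_nf
      ring_nf at hP
      linarith
    linarith
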